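/- Let L ≥ 1 and let G be the simple graph consisting of two vertex-disjoint stars with roots r₁ and r₂, each with L leaves, together with the additional edge {r₁, r₂}. Let f : V(G) → {1,2} be a coloring that is a proper coloring of each of the two stars and satisfies f(r₁) = f(r₂). Then every proper 2-coloring g : V(G) → {1,2} of G satisfies |{v ∈ V(G) : g(v) ≠ f(v)}| ≥ L + 1. -/

import Mathlib

/-- Two vertex-disjoint stars on `Fin (2*L+2)`: the first has root `0` and leaves
`1,…,L`; the second has root `L+1` and leaves `L+2,…,2L+1`. -/
def twoStars (L : ℕ) : SimpleGraph (Fin (2 * L + 2)) :=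
  SimpleGraph.fromRel fun u v =>
    (u.val = 0 ∧ 1 ≤ v.val ∧ v.val ≤ L) ∨ (u.val = L + 1 ∧ L + 2 ≤ v.val)

/-- The two stars together with the edge linking their roots. -/
def twoStarsLinked (L : ℕ) : SimpleGraph (Fin (2 * L + 2)) :=
  twoStars L ⊔
    SimpleGraph.fromEdgeSet
      {s((⟨0, by omega⟩ : Fin (2 * L + 2)), (⟨L + 1, by omega⟩ : Fin (2 * L + 2)))}

/-- A matching link forces many recolorings: if `f` properly 2-colors each of the two
stars and gives both roots the same color, then any proper 2-coloring `g` of the linked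
graph differs from `f` on at least `L + 1` vertices. -/
theorem matching_link_recolorings (L : ℕ) (hL : 1 ≤ L)
    (f g : Fin (2 * L + 2) → ℕ)
    (hf2 : ∀ v, f v = 1 ∨ f v = 2)
    (hfproper : ∀ u v, (twoStars L).Adj u v → f u ≠ f v)
    (hroots : f ⟨0, by omega⟩ = f ⟨L + 1, by omega⟩)
    (hg2 : ∀ v, g v = 1 ∨ g v = 2)
    (hgproper : ∀ u v, (twoStarsLinked L).Adj u v → g u ≠ g v) :
    L + 1 ≤ (Finset.univ.filter fun v => g v ≠ f v).card := by
  set r0 : Fin (2 * L + 2) := ⟨0, by omega⟩ with hr0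
  set r1 : Fin (2 * L + 2) := ⟨L + 1, by omega⟩ with hr1
  -- roots are adjacent in the linked graph
  have hadjroots : (twoStarsLinked L).Adj r0 r1 := by
    have hne : r0 ≠ r1 := fun h => by simp [hr0, hr1, Fin.ext_iff] at h
    exact Or.inr ((SimpleGraph.fromEdgeSet_adj _).mpr ⟨rfl, hne⟩)
  have hgr : g r0 ≠ g r1 := hgproper _ _ hadjroots
  -- adjacency of root 0 to its leaves
  have hadj0 : ∀ v : Fin (2 * L + 2), 1 ≤ v.val → v.val ≤ L → (twoStars L).Adj r0 v := by
    intro v h1 h2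
    refine ⟨?_, Or.inl (Or.inl ⟨rfl, h1, h2⟩)⟩
    intro h
    have := congrArg Fin.val h
    simp [hr0] at this
    omega
  -- adjacency of root 1 to its leaves
  have hadj1 : ∀ v : Fin (2 * L + 2), L + 2 ≤ v.val → (twoStars L).Adj r1 v := by
    intro v h1
    refine ⟨?_, Or.inl (Or.inr ⟨rfl, h1⟩)⟩
    intro h
    have := congrArg Fin.val h
    simp [hr1] at this
    omega
  have hsub : ∀ u v, (twoStars L).Adj u v → (twoStarsLinked L).Adj u v :=
    fun u v h => Or.inl h
  -- key: either g differs from f at r0 or at r1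
  have hkey : g r0 ≠ f r0 ∨ g r1 ≠ f r1 := by
    by_contra h
    push_neg at h
    exact hgr (by rw [h.1, h.2, hroots])
  rcases hkey with hk | hk
  · -- all of 0,1,…,L differ
    have hdiff : ∀ v : Fin (2 * L + 2), v.val ≤ L → g v ≠ f v := by
      intro v hv
      rcases Nat.eq_zero_or_pos v.val with h0 | h0
      · have : v = r0 := Fin.ext h0
        rw [this]; exact hk
      · have hadj := hadj0 v h0 hv
        have hf := hfproper _ _ hadj
        have hg := hgproper _ _ (hsub _ _ hadj)
        rcases hf2 r0 with h1 | h1 <;> rcases hf2 v with h2 | h2 <;>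
          rcases hg2 r0 with h3 | h3 <;> rcases hg2 v with h4 | h4 <;> omega
    open Fin.NatCast in
    calc L + 1 = (Finset.range (L + 1)).card := (Finset.card_range _).symm
      _ ≤ _ := by
        refine Finset.card_le_card_of_injOn (fun i : ℕ => (i : Fin (2 * L + 2))) ?_ ?_
        · intro i hi
          simp only [Finset.mem_coe, Finset.mem_range] at hi
          have hval : ((i : Fin (2 * L + 2))).val = i := by
            rw [Fin.val_natCast, Nat.mod_eq_of_lt (by omega)]
          simp only [Finset.mem_coe, Finset.mem_filter, Finset.mem_univ, true_and]
          exact hdiff _ (by omega)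
        · intro a ha b hb hab
          simp only [Finset.coe_range, Set.mem_Iio] at ha hb
          have := congrArg Fin.val hab
          simpa [Fin.val_natCast, Nat.mod_eq_of_lt (by omega : a < 2 * L + 2),
            Nat.mod_eq_of_lt (by omega : b < 2 * L + 2)] using this
  · -- all of L+1,…,2L+1 differ
    have hdiff : ∀ v : Fin (2 * L + 2), L + 1 ≤ v.val → g v ≠ f v := by
      intro v hv
      rcases eq_or_lt_of_le hv with h0 | h0
      · have : v = r1 := Fin.ext h0.symm
        rw [this]; exact hk
      · have hadj := hadj1 v (by omega)
        have hf := hfproper _ _ hadj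
        have hg := hgproper _ _ (hsub _ _ hadj)
        rcases hf2 r1 with h1 | h1 <;> rcases hf2 v with h2 | h2 <;>
          rcases hg2 r1 with h3 | h3 <;> rcases hg2 v with h4 | h4 <;> omega
    open Fin.NatCast in
    calc L + 1 = (Finset.range (L + 1)).card := (Finset.card_range _).symm
      _ ≤ _ := by
        refine Finset.card_le_card_of_injOn
            (fun i : ℕ => ((i + L + 1 : ℕ) : Fin (2 * L + 2))) ?_ ?_
        · intro i hi
          simp only [Finset.mem_coe, Finset.mem_range] at hi
          have hval : (((i + L + 1 : ℕ) : Fin (2 * L + 2))).val = i + L + 1 := by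
            rw [Fin.val_natCast, Nat.mod_eq_of_lt (by omega)]
          simp only [Finset.mem_coe, Finset.mem_filter, Finset.mem_univ, true_and]
          exact hdiff _ (by omega)
        · intro a ha b hb hab
          simp only [Finset.coe_range, Set.mem_Iio] at ha hb
          have := congrArg Fin.val hab
          simp only [Fin.val_natCast] at this
          rw [Nat.mod_eq_of_lt (by omega), Nat.mod_eq_of_lt (by omega)] at this
          omega
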